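/- A 3-matroid (W,H) is equatable if and only if it is exchangeable. -/

import Mathlib

set_option linter.unusedSectionVars false
set_option linter.unusedVariables false
set_option linter.unreachableTactic false
set_option linter.unusedTactic false
set_option maxHeartbeats 1000000

open Finset

variable {V : Type*}

/-- A `k`-hypergraph `H` is separable if some vertex labeling `x : V → ℝ` has
`H` equal to the set of `k`-subsets with nonnegative label sum. -/
def SeparableHypergraph [Fintype V] [DecidableEq V] (k : ℕ) (H : Finset (Finset V)) : Prop :=
  ∃ x : V → ℝ, ∀ E : Finset V, E ∈ H ↔ E.card = k ∧ 0 ≤ ∑ v ∈ E, x v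

/-- A `k`-hypergraph `H` is equatable if some nonzero nonnegative labeling `y` of the
`k`-subsets of `V` has, for every vertex `v`, the sum of labels of edges containing `v`
equal to the sum of labels of non-edges containing `v`. -/
def EquatableHypergraph [Fintype V] [DecidableEq V] (k : ℕ) (H : Finset (Finset V)) : Prop :=
  ∃ y : Finset V → ℝ,
    (∀ G, 0 ≤ y G) ∧
    (∃ G ∈ (univ : Finset V).powersetCard k, y G ≠ 0) ∧
    ∀ v : V,
      ∑ E ∈ ((univ : Finset V).powersetCard k).filter (fun E => v ∈ E ∧ E ∈ H), y E =
      ∑ F ∈ ((univ : Finset V).powersetCard k).filter (fun F => v ∈ F ∧ F ∉ H), y F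

/-- A hypergraph is exchangeable if there are edges `E₁, E₂` and `v₁ ∈ E₁ \ E₂`,
`v₂ ∈ E₂ \ E₁` such that both sets obtained by exchanging `v₁` and `v₂` are non-edges. -/
def ExchangeableHypergraph [DecidableEq V] (H : Finset (Finset V)) : Prop :=
  ∃ E₁ ∈ H, ∃ E₂ ∈ H, ∃ v₁ ∈ E₁ \ E₂, ∃ v₂ ∈ E₂ \ E₁,
    insert v₂ (E₁.erase v₁) ∉ H ∧ insert v₁ (E₂.erase v₂) ∉ H

section Aux

variable [Fintype V] [DecidableEq V]

/-- `w` can replace `v` in any edge. -/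
def Dm (H : Finset (Finset V)) (v w : V) : Prop :=
  ∀ E ∈ H, v ∈ E → w ∉ E → insert w (E.erase v) ∈ H

noncomputable def rk (H : Finset (Finset V)) (v : V) : ℕ := {u | ¬ Dm H v u}.ncard

lemma dm_refl (H : Finset (Finset V)) (v : V) : Dm H v v :=
  fun _ _ hv hv' => absurd hv hv'

lemma dm_trans {H : Finset (Finset V)} {u v w : V} (h1 : Dm H u v) (h2 : Dm H v w) :
    Dm H u w := by
  intro E hE huE hwE
  by_cases hwv : w = v
  · subst hwv; exact h1 E hE huE hwE
  by_cases huv : u = v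
  · subst huv; exact h2 E hE huE hwE
  by_cases hvE : v ∈ E
  · have hE2 : insert w (E.erase v) ∈ H := h2 E hE hvE hwE
    have huE2 : u ∈ insert w (E.erase v) := by
      simp [Finset.mem_insert, Finset.mem_erase, huv, huE]
    have hvE2 : v ∉ insert w (E.erase v) := by
      simp [Finset.mem_insert, Finset.mem_erase, Ne.symm hwv]
    have := h1 _ hE2 huE2 hvE2
    have huw : u ≠ w := by rintro rfl; exact hwE huE
    have heq : insert v ((insert w (E.erase v)).erase u) = insert w (E.erase u) := by
      ext a
      simp only [Finset.mem_insert, Finset.mem_erase]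
      constructor
      · rintro (rfl | ⟨hau, (rfl | ⟨hav, haE⟩)⟩)
        · exact Or.inr ⟨fun h => huv h.symm, hvE⟩
        · exact Or.inl rfl
        · exact Or.inr ⟨hau, haE⟩
      · rintro (rfl | ⟨hau, haE⟩)
        · exact Or.inr ⟨Ne.symm huw, Or.inl rfl⟩
        · by_cases hav : a = v
          · exact Or.inl hav
          · exact Or.inr ⟨hau, Or.inr ⟨hav, haE⟩⟩
      
    rwa [heq] at this
  · have hE1 : insert v (E.erase u) ∈ H := h1 E hE huE hvE
    have hv1 : v ∈ insert v (E.erase u) := Finset.mem_insert_self _ _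
    have hw1 : w ∉ insert v (E.erase u) := by
      simp [Finset.mem_insert, Finset.mem_erase, hwv, hwE]
    have := h2 _ hE1 hv1 hw1
    rwa [Finset.erase_insert (by simp [Finset.mem_erase, hvE])] at this

section
variable {H : Finset (Finset V)}
  (hLE : ∀ E₁ ∈ H, ∀ E₂ ∈ H, ∀ v₁ ∈ E₁ \ E₂, ∀ v₂ ∈ E₂ \ E₁,
      insert v₂ (E₁.erase v₁) ∈ H ∨ insert v₁ (E₂.erase v₂) ∈ H)

include hLE

lemma dm_total (v w : V) : Dm H v w ∨ Dm H w v := by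
  by_contra hc
  push_neg at hc
  obtain ⟨h1, h2⟩ := hc
  simp only [Dm, not_forall] at h1 h2
  obtain ⟨E, hE, hvE, hwE, hE'⟩ := h1
  obtain ⟨F, hF, hwF, hvF, hF'⟩ := h2
  have := hLE E hE F hF v (by simp [Finset.mem_sdiff, hvE, hvF]) w
    (by simp [Finset.mem_sdiff, hwF, hwE])
  tauto

lemma rk_dm {v w : V} (h : rk H v ≤ rk H w) : Dm H v w := by
  by_contra hvw
  have hwv : Dm H w v := (dm_total hLE v w).resolve_left hvw
  have hsub : {u | ¬ Dm H w u} ⊂ {u | ¬ Dm H v u} := by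
    constructor
    · intro u hu
      simp only [Set.mem_setOf_eq] at *
      intro hvu
      exact hu (dm_trans hwv hvu)
    · intro hsup
      exact (hsup (a := w) hvw) (dm_refl H w)
  have := Set.ncard_lt_ncard hsub (Set.toFinite _)
  have : rk H w < rk H v := this
  omega

lemma swap {E : Finset V} {v w : V} (hE : E ∈ H) (hv : v ∈ E) (hw : w ∉ E)
    (h : rk H v ≤ rk H w) : insert w (E.erase v) ∈ H :=
  rk_dm hLE h E hE hv hw

lemma swap3 {x y z w : V} (h : ({x, y, z} : Finset V) ∈ H)
    (hxy : x ≠ y) (hxz : x ≠ z) (hyz : y ≠ z) (hwy : w ≠ y) (hwz : w ≠ z)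
    (hr : rk H x ≤ rk H w) : ({w, y, z} : Finset V) ∈ H := by
  by_cases hwx : w = x
  · subst hwx; exact h
  · have hm : x ∈ ({x, y, z} : Finset V) := by simp
    have hnm : w ∉ ({x, y, z} : Finset V) := by simp [hwx, hwy, hwz]
    have := swap hLE h hm hnm hr
    rwa [show ({x, y, z} : Finset V).erase x = {y, z} from
      Finset.erase_insert (by simp [hxy, hxz])] at this
end

lemma sum3 {a b c : V} (f : V → ℝ) (hab : a ≠ b) (hac : a ≠ c) (hbc : b ≠ c) :
    ∑ v ∈ ({a, b, c} : Finset V), f v = f a + f b + f c := by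
  rw [Finset.sum_insert (by simp [hab, hac]), Finset.sum_insert (by simp [hbc]),
    Finset.sum_singleton, add_assoc]

lemma sum3n {a b c : V} (f : V → ℕ) (hab : a ≠ b) (hac : a ≠ c) (hbc : b ≠ c) :
    ∑ v ∈ ({a, b, c} : Finset V), f v = f a + f b + f c := by
  rw [Finset.sum_insert (by simp [hab, hac]), Finset.sum_insert (by simp [hbc]),
    Finset.sum_singleton, add_assoc]

lemma sort3 (H : Finset (Finset V)) {E : Finset V} (hE : E.card = 3) :
    ∃ p q r : V, p ≠ q ∧ p ≠ r ∧ q ≠ r ∧ E = {p, q, r} ∧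
      rk H q ≤ rk H p ∧ rk H r ≤ rk H q := by
  obtain ⟨x, y, z, hxy, hxz, hyz, rfl⟩ := Finset.card_eq_three.mp hE
  have perm : ∀ p q r : V, ({p, q, r} : Finset V) = {x, y, z} →
      rk H q ≤ rk H p → rk H r ≤ rk H q → p ≠ q → p ≠ r → q ≠ r →
      ∃ p' q' r' : V, p' ≠ q' ∧ p' ≠ r' ∧ q' ≠ r' ∧ ({x, y, z} : Finset V) = {p', q', r'} ∧
        rk H q' ≤ rk H p' ∧ rk H r' ≤ rk H q' :=
    fun p q r he h1 h2 d1 d2 d3 => ⟨p, q, r, d1, d2, d3, he.symm, h1, h2⟩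
  rcases le_total (rk H x) (rk H y) with h1 | h1 <;>
    rcases le_total (rk H y) (rk H z) with h2 | h2 <;>
    rcases le_total (rk H x) (rk H z) with h3 | h3
  · exact perm z y x (by ext a; simp; try tauto) h2 h1 (Ne.symm hyz) (Ne.symm hxz) (Ne.symm hxy)
  · exact perm z y x (by ext a; simp; try tauto) h2 h1 (Ne.symm hyz) (Ne.symm hxz) (Ne.symm hxy)
  · exact perm y z x (by ext a; simp; try tauto) h2 h3 hyz (Ne.symm hxy) (Ne.symm hxz)
  · exact perm y x z (by ext a; simp; try tauto) h1 h3 (Ne.symm hxy) hyz hxz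
  · exact perm z x y (by ext a; simp; try tauto) h3 h1 (Ne.symm hxz) (Ne.symm hyz) hxy
  · exact perm x z y (by ext a; simp; try tauto) h3 h2 hxz hxy (Ne.symm hyz)
  · exact perm x y z (by ext a; simp; try tauto) h1 h2 hxy hxz hyz
  · exact perm x y z (by ext a; simp; try tauto) h1 h2 hxy hxz hyz


section
variable {H : Finset (Finset V)}
  (hLE : ∀ E₁ ∈ H, ∀ E₂ ∈ H, ∀ v₁ ∈ E₁ \ E₂, ∀ v₂ ∈ E₂ \ E₁,
      insert v₂ (E₁.erase v₁) ∈ H ∨ insert v₁ (E₂.erase v₂) ∈ H)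
include hLE

lemma L2 {s t u q r : V} (hstu : ({s, t, u} : Finset V) ∈ H)
    (hst : s ≠ t) (hsu : s ≠ u) (htu : t ≠ u) (hqr : q ≠ r) (hqs : q ≠ s) (hrs : r ≠ s)
    (h_ut : rk H u ≤ rk H t) (h_rq : rk H r ≤ rk H q)
    (h_tq : rk H t ≤ rk H q) (h_ur : rk H u ≤ rk H r) :
    ({s, q, r} : Finset V) ∈ H := by
  by_cases hqt : q = t
  · -- q = t
    by_cases hru : r = u
    · rw [show ({s, q, r} : Finset V) = {s, t, u} by rw [hqt, hru]]; exact hstu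
    · -- replace u by r in {s,t,u}
      have h1 : ({u, s, t} : Finset V) ∈ H := by
        rwa [show ({s, t, u} : Finset V) = {u, s, t} by ext a; simp; tauto] at hstu
      have hrt : r ≠ t := by rw [← hqt]; exact Ne.symm hqr
      have h2 := swap3 hLE h1 (Ne.symm hsu) (Ne.symm htu) hst hrs hrt h_ur
      rwa [show ({r, s, t} : Finset V) = {s, q, r} by rw [hqt]; ext a; simp; tauto] at h2
  by_cases hqu : q = u
  · -- q = u : then rk t = rk q
    have hrk : rk H t ≤ rk H r := by
      have : rk H q = rk H u := by rw [hqu]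
      omega
    by_cases hrt : r = t
    · rw [show ({s, q, r} : Finset V) = {s, t, u} by rw [hqu, hrt]; ext a; simp; tauto]
      exact hstu
    · -- replace t by r in {s,t,u}
      have h1 : ({t, s, u} : Finset V) ∈ H := by
        rwa [show ({s, t, u} : Finset V) = {t, s, u} by ext a; simp; tauto] at hstu
      have hru : r ≠ u := by rw [← hqu]; exact Ne.symm hqr
      have h2 := swap3 hLE h1 (Ne.symm hst) htu hsu hrs hru hrk
      rwa [show ({r, s, u} : Finset V) = {s, q, r} by rw [hqu]; ext a; simp; tauto] at h2
  -- q ∉ {s,t,u}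
  by_cases hru : r = u
  · -- replace t by q
    have h1 : ({t, s, u} : Finset V) ∈ H := by
      rwa [show ({s, t, u} : Finset V) = {t, s, u} by ext a; simp; tauto] at hstu
    have h2 := swap3 hLE h1 (Ne.symm hst) htu hsu hqs hqu h_tq
    rwa [show ({q, s, u} : Finset V) = {s, q, r} by rw [hru]; ext a; simp; tauto] at h2
  by_cases hrt : r = t
  · -- replace u by q
    have h1 : ({u, s, t} : Finset V) ∈ H := by
      rwa [show ({s, t, u} : Finset V) = {u, s, t} by ext a; simp; tauto] at hstu
    have h2 := swap3 hLE h1 (Ne.symm hsu) (Ne.symm htu) hst hqs hqt (le_trans h_ut h_tq)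
    rwa [show ({q, s, t} : Finset V) = {s, q, r} by rw [hrt]; ext a; simp; tauto] at h2
  · -- generic: replace t by q, then u by r
    have h1 : ({t, s, u} : Finset V) ∈ H := by
      rwa [show ({s, t, u} : Finset V) = {t, s, u} by ext a; simp; tauto] at hstu
    have h2 := swap3 hLE h1 (Ne.symm hst) htu hsu hqs hqu h_tq
    have h3 : ({u, s, q} : Finset V) ∈ H := by
      rwa [show ({q, s, u} : Finset V) = {u, s, q} by ext a; simp; tauto] at h2
    have h4 := swap3 hLE h3 (Ne.symm hsu) (fun h => hqu h.symm) (Ne.symm hqs) hrs hqr.symm h_ur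
    rwa [show ({r, s, q} : Finset V) = {s, q, r} by ext a; simp; tauto] at h4

lemma UP {α β γ p q r : V} (hA : ({α, β, γ} : Finset V) ∈ H)
    (hab : α ≠ β) (hac : α ≠ γ) (hbc : β ≠ γ)
    (sab : rk H β ≤ rk H α) (sbc : rk H γ ≤ rk H β)
    (hpq : p ≠ q) (hpr : p ≠ r) (hqr : q ≠ r)
    (spq : rk H q ≤ rk H p) (sqr : rk H r ≤ rk H q)
    (ha : rk H α ≤ rk H p) (hb : rk H β ≤ rk H q) (hc : rk H γ ≤ rk H r) :
    ({p, q, r} : Finset V) ∈ H := by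
  by_cases hpa : p = α
  · subst hpa
    exact L2 hLE hA hab hac hbc hqr (Ne.symm hpq) (Ne.symm hpr) sbc sqr hb hc
  by_cases hpb : p = β
  · have h1 : ({p, α, γ} : Finset V) ∈ H := by
      rwa [show ({α, β, γ} : Finset V) = {p, α, γ} by rw [hpb]; ext a; simp; tauto] at hA
    have hrkp : rk H p = rk H β := by rw [hpb]
    refine L2 hLE h1 (by rw [hpb]; exact Ne.symm hab) (by rw [hpb]; exact hbc) hac hqr
      (Ne.symm hpq) (Ne.symm hpr) (le_trans sbc sab) sqr (by omega) hc
  by_cases hpc : p = γ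
  · have h1 : ({p, α, β} : Finset V) ∈ H := by
      rwa [show ({α, β, γ} : Finset V) = {p, α, β} by rw [hpc]; ext a; simp; tauto] at hA
    have hrkp : rk H p = rk H γ := by rw [hpc]
    refine L2 hLE h1 (by rw [hpc]; exact Ne.symm hac) (by rw [hpc]; exact Ne.symm hbc) hab hqr
      (Ne.symm hpq) (Ne.symm hpr) sab sqr (by omega) (by omega)
  · have h1 := swap3 hLE hA hab hac hbc hpb hpc ha
    exact L2 hLE h1 hpb hpc hbc hqr (Ne.symm hpq) (Ne.symm hpr) sbc sqr hb hc
end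

noncomputable def ky (H : Finset (Finset V)) (B : Finset V) : ℕ :=
  ∑ v ∈ B, 4 ^ (Fintype.card V - rk H v)

lemma rk_le_card (H : Finset (Finset V)) (v : V) : rk H v ≤ Fintype.card V := by
  have := Set.ncard_le_ncard (Set.subset_univ {u | ¬ Dm H v u}) Set.finite_univ
  rwa [Set.ncard_univ, Nat.card_eq_fintype_card] at this


lemma ky3 (H : Finset (Finset V)) {a b c : V} (hab : a ≠ b) (hac : a ≠ c) (hbc : b ≠ c) :
    ky H {a, b, c} = 4 ^ (Fintype.card V - rk H a) + 4 ^ (Fintype.card V - rk H b)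
      + 4 ^ (Fintype.card V - rk H c) := sum3n _ hab hac hbc

lemma pw_mono {a b : ℕ} (h : a ≤ b) : (4:ℕ) ^ a ≤ 4 ^ b :=
  Nat.pow_le_pow_right (by norm_num) h

lemma contraA (Z X Y m : ℕ) (c1 : 1 ≤ Z) (c2 : 4 * Z ≤ m) (c3 : X ≤ Z) (c4 : Y ≤ Z)
    (c5 : m + X + Y ≤ Z + X + Y) : False := by omega

lemma contraB (Z X Y m w : ℕ) (c1 : 1 ≤ Z) (c2 : 4 * Z ≤ m) (c3 : X ≤ Z) (c4 : w ≤ X)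
    (c5 : m + w + Y ≤ X + Z + Y) : False := by omega

lemma contraC (h i j k l m : ℕ) (c1 : 1 ≤ j) (c2 : 4 * j ≤ k) (c3 : i ≤ j) (c4 : h ≤ j)
    (c5 : l + m + k ≤ h + i + j) : False := by omega


section
variable {H : Finset (Finset V)} {α β γ p q r : V}
  (hLE : ∀ E₁ ∈ H, ∀ E₂ ∈ H, ∀ v₁ ∈ E₁ \ E₂, ∀ v₂ ∈ E₂ \ E₁,
      insert v₂ (E₁.erase v₁) ∈ H ∨ insert v₁ (E₂.erase v₂) ∈ H)
  (hbex : ∀ E₁ ∈ H, ∀ E₂ ∈ H, ∀ v₁ ∈ E₁ \ E₂,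
      ∃ v₂ ∈ E₂ \ E₁, insert v₂ (E₁.erase v₁) ∈ H)
  (hA : ({α, β, γ} : Finset V) ∈ H)
  (hab : α ≠ β) (hac : α ≠ γ) (hbc : β ≠ γ)
  (sab : rk H β ≤ rk H α) (sbc : rk H γ ≤ rk H β)
  (hmax : ∀ B ∈ H, ky H B ≤ ky H {α, β, γ})
  (hE : ({p, q, r} : Finset V) ∈ H)
  (hpq : p ≠ q) (hpr : p ≠ r) (hqr : q ≠ r)
  (spq : rk H q ≤ rk H p) (sqr : rk H r ≤ rk H q)

include hLE hbex hA hab hac hbc sab sbc hmax hE hpq hpr hqr spq sqr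

lemma down : rk H γ ≤ rk H r ∧ rk H β ≤ rk H q ∧ rk H α ≤ rk H p := by
  have hrka := rk_le_card H α
  have hrkb := rk_le_card H β
  have hrkc := rk_le_card H γ
  have hrkp := rk_le_card H p
  have hrkq := rk_le_card H q
  have hrkr := rk_le_card H r
  have keyA : ky H {α, β, γ} = 4 ^ (Fintype.card V - rk H α) + 4 ^ (Fintype.card V - rk H β)
      + 4 ^ (Fintype.card V - rk H γ) := ky3 H hab hac hbc
  have posa : 0 < (4:ℕ) ^ (Fintype.card V - rk H α) := Nat.pow_pos (by norm_num)
  have posb : 0 < (4:ℕ) ^ (Fintype.card V - rk H β) := Nat.pow_pos (by norm_num)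
  have posc : 0 < (4:ℕ) ^ (Fintype.card V - rk H γ) := Nat.pow_pos (by norm_num)
  -- part (i)
  have part1 : rk H γ ≤ rk H r := by
    by_contra hcon
    push_neg at hcon
    have h1 : (4:ℕ) * 4 ^ (Fintype.card V - rk H γ) ≤ 4 ^ (Fintype.card V - rk H r) := by
      rw [← pow_succ']
      exact pw_mono (by omega)
    have h3 := hmax _ hE
    rw [ky3 H hpq hpr hqr, keyA] at h3
    exact contraC _ _ _ _ _ _ posc h1 (pw_mono (by omega)) (pw_mono (by omega)) h3
  -- part (ii)
  have part2 : rk H β ≤ rk H q := by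
    by_contra hcon
    push_neg at hcon
    obtain ⟨τ, -, hτ'⟩ := Finset.exists_max_image univ (rk H) ⟨α, mem_univ α⟩
    have hτ : ∀ b, rk H b ≤ rk H τ := fun b => hτ' b (mem_univ b)
    have hτa := hτ α
    have hτq : rk H q < rk H τ := by have := hτ β; omega
    have hτne_q : τ ≠ q := fun h => by rw [h] at hτq; omega
    have hτne_r : τ ≠ r := fun h => by rw [h] at hτq; omega
    have hE1 : ({τ, q, r} : Finset V) ∈ H := by
      by_cases hτp : τ = p
      · rwa [hτp]
      · exact swap3 hLE hE hpq hpr hqr hτne_q hτne_r (hτ p)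
    by_cases hta : τ = α
    · have hβt : β ≠ τ := by rw [hta]; exact Ne.symm hab
      have hβq : β ≠ q := fun h => by rw [h] at hcon; omega
      have hβr : β ≠ r := fun h => by rw [← h] at sqr; omega
      have hβmem : β ∈ ({α, β, γ} : Finset V) \ {τ, q, r} := by
        simp [Finset.mem_sdiff, hβt, hβq, hβr, Ne.symm hab]
      obtain ⟨v₂, hv₂, hX⟩ := hbex _ hA _ hE1 β hβmem
      rw [Finset.mem_sdiff] at hv₂
      obtain ⟨hv₂E, hv₂A⟩ := hv₂
      have hv₂a : v₂ ≠ α := by intro h; apply hv₂A; simp [h]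
      have hv₂c : v₂ ≠ γ := by intro h; apply hv₂A; simp [h]
      have hv₂rk : rk H v₂ ≤ rk H q := by
        have hm : v₂ = τ ∨ v₂ = q ∨ v₂ = r := by simpa using hv₂E
        rcases hm with h | h | h
        · exact absurd (h.trans hta) hv₂a
        · rw [h]
        · rw [h]; exact sqr
      have herase : ({α, β, γ} : Finset V).erase β = {α, γ} := by
        ext a
        simp only [Finset.mem_erase, Finset.mem_insert, Finset.mem_singleton]
        constructor
        · rintro ⟨h1, h2 | h2 | h2⟩ <;> tauto
        · rintro (h | h) <;> subst h <;> exact ⟨by tauto, by tauto⟩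
      rw [herase] at hX
      have h3 := hmax _ hX
      rw [show (insert v₂ ({α, γ} : Finset V)) = {v₂, α, γ} from rfl] at h3
      rw [ky3 H hv₂a hv₂c hac, keyA] at h3
      have h1 : (4:ℕ) * 4 ^ (Fintype.card V - rk H β) ≤ 4 ^ (Fintype.card V - rk H v₂) := by
        rw [← pow_succ']
        exact pw_mono (by omega)
      exact contraA _ _ _ _ posb h1 (pw_mono (by omega)) (pw_mono (by omega))
        (by linarith)
    by_cases htb : τ = β
    · have haeq : rk H α = rk H β := by have := hτ α; rw [htb] at this; omega
      have hαt : α ≠ τ := by rw [htb]; exact hab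
      have hαq : α ≠ q := fun h => by rw [h] at haeq; omega
      have hαr : α ≠ r := fun h => by rw [h] at haeq; omega
      have hαmem : α ∈ ({α, β, γ} : Finset V) \ {τ, q, r} := by
        simp [Finset.mem_sdiff, hαt, hαq, hαr]
      obtain ⟨v₂, hv₂, hX⟩ := hbex _ hA _ hE1 α hαmem
      rw [Finset.mem_sdiff] at hv₂
      obtain ⟨hv₂E, hv₂A⟩ := hv₂
      have hv₂b : v₂ ≠ β := by intro h; apply hv₂A; simp [h]
      have hv₂c : v₂ ≠ γ := by intro h; apply hv₂A; simp [h]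
      have hv₂rk : rk H v₂ ≤ rk H q := by
        have hm : v₂ = τ ∨ v₂ = q ∨ v₂ = r := by simpa using hv₂E
        rcases hm with h | h | h
        · exact absurd (h.trans htb) hv₂b
        · rw [h]
        · rw [h]; exact sqr
      have herase : ({α, β, γ} : Finset V).erase α = {β, γ} :=
        Finset.erase_insert (by simp [hab, hac])
      rw [herase] at hX
      have h3 := hmax _ hX
      rw [show (insert v₂ ({β, γ} : Finset V)) = {v₂, β, γ} from rfl] at h3
      rw [ky3 H hv₂b hv₂c hbc, keyA] at h3
      have h1 : (4:ℕ) * 4 ^ (Fintype.card V - rk H α) ≤ 4 ^ (Fintype.card V - rk H v₂) := by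
        rw [← pow_succ']
        exact pw_mono (by omega)
      exact contraA _ _ _ _ posa h1 (pw_mono (by omega)) (pw_mono (by omega))
        (by linarith)
    by_cases htc : τ = γ
    · exfalso
      have := hτ β
      rw [htc] at this
      omega
    · have hA1 : ({τ, β, γ} : Finset V) ∈ H := swap3 hLE hA hab hac hbc htb htc (hτ α)
      have hβt : β ≠ τ := Ne.symm htb
      have hβq : β ≠ q := fun h => by rw [h] at hcon; omega
      have hβr : β ≠ r := fun h => by rw [← h] at sqr; omega
      have hβmem : β ∈ ({τ, β, γ} : Finset V) \ {τ, q, r} := by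
        simp [Finset.mem_sdiff, hβt, hβq, hβr]
      obtain ⟨v₂, hv₂, hX⟩ := hbex _ hA1 _ hE1 β hβmem
      rw [Finset.mem_sdiff] at hv₂
      obtain ⟨hv₂E, hv₂A⟩ := hv₂
      have hv₂t : v₂ ≠ τ := by intro h; apply hv₂A; simp [h]
      have hv₂c : v₂ ≠ γ := by intro h; apply hv₂A; simp [h]
      have hv₂rk : rk H v₂ ≤ rk H q := by
        have hm : v₂ = τ ∨ v₂ = q ∨ v₂ = r := by simpa using hv₂E
        rcases hm with h | h | h
        · exact absurd h hv₂t
        · rw [h]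
        · rw [h]; exact sqr
      have herase : ({τ, β, γ} : Finset V).erase β = {τ, γ} := by
        ext a
        simp only [Finset.mem_erase, Finset.mem_insert, Finset.mem_singleton]
        constructor
        · rintro ⟨h1, h2 | h2 | h2⟩ <;> tauto
        · rintro (h | h) <;> subst h <;> exact ⟨by tauto, by tauto⟩
      rw [herase] at hX
      have h3 := hmax _ hX
      rw [show (insert v₂ ({τ, γ} : Finset V)) = {v₂, τ, γ} from rfl] at h3
      rw [ky3 H hv₂t hv₂c (fun h => htc h), keyA] at h3
      have h1 : (4:ℕ) * 4 ^ (Fintype.card V - rk H β) ≤ 4 ^ (Fintype.card V - rk H v₂) := by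
        rw [← pow_succ']
        exact pw_mono (by omega)
      exact contraB (4 ^ (Fintype.card V - rk H β)) (4 ^ (Fintype.card V - rk H α))
        (4 ^ (Fintype.card V - rk H γ)) (4 ^ (Fintype.card V - rk H v₂))
        (4 ^ (Fintype.card V - rk H τ)) posb h1 (pw_mono (by omega))
        (pw_mono (by have := hτ α; omega)) h3
  -- part (iii)
  have part3 : rk H α ≤ rk H p := by
    by_contra hcon
    push_neg at hcon
    have hαp : α ≠ p := fun h => by rw [h] at hcon; omega
    have hαq : α ≠ q := fun h => by rw [h] at hcon; omega
    have hαr : α ≠ r := fun h => by rw [h] at hcon; omega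
    have hαmem : α ∈ ({α, β, γ} : Finset V) \ {p, q, r} := by
      simp [Finset.mem_sdiff, hαp, hαq, hαr]
    obtain ⟨v₂, hv₂, hX⟩ := hbex _ hA _ hE α hαmem
    rw [Finset.mem_sdiff] at hv₂
    obtain ⟨hv₂E, hv₂A⟩ := hv₂
    have hv₂b : v₂ ≠ β := by intro h; apply hv₂A; simp [h]
    have hv₂c : v₂ ≠ γ := by intro h; apply hv₂A; simp [h]
    have hv₂rk : rk H v₂ ≤ rk H p := by
      have hm : v₂ = p ∨ v₂ = q ∨ v₂ = r := by simpa using hv₂E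
      rcases hm with h | h | h <;> rw [h] <;> omega
    have herase : ({α, β, γ} : Finset V).erase α = {β, γ} :=
      Finset.erase_insert (by simp [hab, hac])
    rw [herase] at hX
    have h3 := hmax _ hX
    rw [show (insert v₂ ({β, γ} : Finset V)) = {v₂, β, γ} from rfl] at h3
    rw [ky3 H hv₂b hv₂c hbc, keyA] at h3
    have h1 : (4:ℕ) * 4 ^ (Fintype.card V - rk H α) ≤ 4 ^ (Fintype.card V - rk H v₂) := by
      rw [← pow_succ']
      exact pw_mono (by omega)
    exact contraA _ _ _ _ posa h1 (pw_mono (by omega)) (pw_mono (by omega))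
      (by linarith)
  exact ⟨part1, part2, part3⟩
end

lemma sep {H : Finset (Finset V)}
    (hH : ∀ E ∈ H, E.card = 3) (hne : H.Nonempty)
    (hbex : ∀ E₁ ∈ H, ∀ E₂ ∈ H, ∀ v₁ ∈ E₁ \ E₂,
      ∃ v₂ ∈ E₂ \ E₁, insert v₂ (E₁.erase v₁) ∈ H)
    (hLE : ∀ E₁ ∈ H, ∀ E₂ ∈ H, ∀ v₁ ∈ E₁ \ E₂, ∀ v₂ ∈ E₂ \ E₁,
      insert v₂ (E₁.erase v₁) ∈ H ∨ insert v₁ (E₂.erase v₂) ∈ H) :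
    ∃ x : V → ℝ, (∀ E ∈ H, 0 ≤ ∑ v ∈ E, x v) ∧
      ∀ F : Finset V, F.card = 3 → F ∉ H → ∑ v ∈ F, x v < 0 := by
  obtain ⟨A, hAH, hmax⟩ := Finset.exists_max_image H (ky H) hne
  obtain ⟨α, β, γ, hab, hac, hbc, hAeq, sab, sbc⟩ := sort3 H (hH A hAH)
  rw [hAeq] at hAH
  have hmax' : ∀ B ∈ H, ky H B ≤ ky H {α, β, γ} := by
    intro B hB; rw [← hAeq]; exact hmax B hB
  set x : V → ℝ := fun v =>
    if rk H α ≤ rk H v then (3:ℝ) else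
      if rk H β ≤ rk H v then -1 else
        if rk H γ ≤ rk H v then -2 else -100 with hx
  have hub : ∀ v, x v ≤ 3 := by
    intro v; simp only [hx]; split_ifs <;> norm_num
  have hlt1 : ∀ v, ¬ (rk H α ≤ rk H v) → x v ≤ -1 := by
    intro v hv; simp only [hx]; split_ifs <;> first | exact absurd ‹_› hv | norm_num
  have hlt2 : ∀ v, ¬ (rk H β ≤ rk H v) → x v ≤ -2 := by
    intro v hv; simp only [hx]; split_ifs with h1 h2 <;>
      first | (exfalso; omega) | norm_num
  have hlt3 : ∀ v, ¬ (rk H γ ≤ rk H v) → x v = -100 := by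
    intro v hv; simp only [hx]; split_ifs with h1 h2 h3 <;>
      first | (exfalso; omega) | rfl
  refine ⟨x, ?_, ?_⟩
  · intro E hE
    obtain ⟨p, q, r, hpq, hpr, hqr, hEeq, spq, sqr⟩ := sort3 H (hH E hE)
    rw [hEeq] at hE ⊢
    obtain ⟨d1, d2, d3⟩ := down hLE hbex hAH hab hac hbc sab sbc hmax' hE hpq hpr hqr spq sqr
    rw [sum3 x hpq hpr hqr]
    have hxp : x p = 3 := by simp only [hx]; rw [if_pos d3]
    have hxq : (-1:ℝ) ≤ x q := by
      simp only [hx]; split_ifs <;> norm_num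
    have hxr : (-2:ℝ) ≤ x r := by
      simp only [hx]; split_ifs <;> norm_num
    linarith
  · intro F hF3 hFH
    obtain ⟨p, q, r, hpq, hpr, hqr, hFeq, spq, sqr⟩ := sort3 H hF3
    rw [hFeq] at hFH ⊢
    rw [sum3 x hpq hpr hqr]
    by_cases c3 : rk H γ ≤ rk H r
    · by_cases c2 : rk H β ≤ rk H q
      · by_cases c1 : rk H α ≤ rk H p
        · exact absurd (UP hLE hAH hab hac hbc sab sbc hpq hpr hqr spq sqr c1 c2 c3) hFH
        · have b1 := hlt1 p c1
          have b2 := hlt1 q (by intro h; exact c1 (le_trans h spq))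
          have b3 := hlt1 r (by intro h; exact c1 (le_trans h (le_trans sqr spq)))
          linarith
      · have b1 := hub p
        have b2 := hlt2 q c2
        have b3 := hlt2 r (by intro h; exact c2 (le_trans h sqr))
        linarith
    · have b1 := hub p
      have b2 := hub q
      have b3 := (hlt3 r c3).le
      linarith

lemma sumswap (x : V → ℝ) (y : Finset V → ℝ)
    (T : Finset (Finset V)) :
    ∑ v ∈ univ, x v * ∑ E ∈ T.filter (fun E => v ∈ E), y E
      = ∑ E ∈ T, (∑ v ∈ E, x v) * y E := by
  have step1 : ∀ v : V, x v * ∑ E ∈ T.filter (fun E => v ∈ E), y E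
      = ∑ E ∈ T, if v ∈ E then x v * y E else 0 := by
    intro v
    rw [Finset.mul_sum, Finset.sum_filter]
  calc ∑ v ∈ univ, x v * ∑ E ∈ T.filter (fun E => v ∈ E), y E
      = ∑ v ∈ univ, ∑ E ∈ T, if v ∈ E then x v * y E else 0 :=
        Finset.sum_congr rfl fun v _ => step1 v
    _ = ∑ E ∈ T, ∑ v ∈ univ, if v ∈ E then x v * y E else 0 := Finset.sum_comm
    _ = ∑ E ∈ T, ∑ v ∈ univ ∩ E, x v * y E :=
        Finset.sum_congr rfl fun E _ => Finset.sum_ite_mem univ E _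
    _ = ∑ E ∈ T, ∑ v ∈ E, x v * y E := by simp [Finset.univ_inter]
    _ = ∑ E ∈ T, (∑ v ∈ E, x v) * y E :=
        Finset.sum_congr rfl fun E _ => by rw [Finset.sum_mul]

theorem hard
    (H : Finset (Finset V))
    (hH : ∀ E ∈ H, E.card = 3) (hne : H.Nonempty)
    (hbex : ∀ E₁ ∈ H, ∀ E₂ ∈ H, ∀ v₁ ∈ E₁ \ E₂,
      ∃ v₂ ∈ E₂ \ E₁, insert v₂ (E₁.erase v₁) ∈ H)
    (heq : EquatableHypergraph 3 H) : ExchangeableHypergraph H := by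
  by_contra hex
  have hLE : ∀ E₁ ∈ H, ∀ E₂ ∈ H, ∀ v₁ ∈ E₁ \ E₂, ∀ v₂ ∈ E₂ \ E₁,
      insert v₂ (E₁.erase v₁) ∈ H ∨ insert v₁ (E₂.erase v₂) ∈ H := by
    intro E₁ hE₁ E₂ hE₂ v₁ hv₁ v₂ hv₂
    by_contra hc
    push_neg at hc
    exact hex ⟨E₁, hE₁, E₂, hE₂, v₁, hv₁, v₂, hv₂, hc.1, hc.2⟩
  obtain ⟨x, hxE, hxF⟩ := sep hH hne hbex hLE
  obtain ⟨y, hy0, ⟨G, hGP, hGne⟩, hveq⟩ := heq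
  set P3 := (univ : Finset V).powersetCard 3 with hP3
  set Tp := P3.filter (fun E => E ∈ H) with hTp
  set Tm := P3.filter (fun E => E ∉ H) with hTm
  have hfilp : ∀ v : V, P3.filter (fun E => v ∈ E ∧ E ∈ H) = Tp.filter (fun E => v ∈ E) := by
    intro v; rw [hTp, Finset.filter_filter]
    exact Finset.filter_congr fun E _ => by tauto
  have hfilm : ∀ v : V, P3.filter (fun E => v ∈ E ∧ E ∉ H) = Tm.filter (fun E => v ∈ E) := by
    intro v; rw [hTm, Finset.filter_filter]
    exact Finset.filter_congr fun E _ => by tauto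
  -- the key identity
  have hkey : ∑ E ∈ Tp, (∑ v ∈ E, x v) * y E = ∑ F ∈ Tm, (∑ v ∈ F, x v) * y F := by
    rw [← sumswap x y Tp, ← sumswap x y Tm]
    refine Finset.sum_congr rfl fun v _ => ?_
    rw [← hfilp, ← hfilm, hveq v]
  have hL : 0 ≤ ∑ E ∈ Tp, (∑ v ∈ E, x v) * y E := by
    refine Finset.sum_nonneg fun E hE => ?_
    rw [hTp, Finset.mem_filter] at hE
    exact mul_nonneg (hxE E hE.2) (hy0 E)
  have hR : ∀ F ∈ Tm, (∑ v ∈ F, x v) * y F ≤ 0 := by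
    intro F hF
    rw [hTm, Finset.mem_filter, hP3, Finset.mem_powersetCard_univ] at hF
    exact mul_nonpos_iff.mpr (Or.inr ⟨(hxF F hF.1 hF.2).le, hy0 F⟩)
  have hR0 : ∑ F ∈ Tm, (∑ v ∈ F, x v) * y F = 0 :=
    le_antisymm (Finset.sum_nonpos hR) (hkey ▸ hL)
  have hyzero : ∀ F ∈ Tm, y F = 0 := by
    intro F hF
    have ht := (Finset.sum_eq_zero_iff_of_nonpos hR).mp hR0 F hF
    rw [hTm, Finset.mem_filter, hP3, Finset.mem_powersetCard_univ] at hF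
    rcases mul_eq_zero.mp ht with h | h
    · exact absurd h (ne_of_lt (hxF F hF.1 hF.2))
    · exact h
  by_cases hGH : G ∈ H
  · have hG3 : G.card = 3 := by rwa [Finset.mem_powersetCard_univ] at hGP
    have hGna : G.Nonempty := Finset.card_pos.mp (by omega)
    obtain ⟨v, hvG⟩ := hGna
    have hpos : 0 < y G := lt_of_le_of_ne (hy0 G) (Ne.symm hGne)
    have hle : y G ≤ ∑ E ∈ P3.filter (fun E => v ∈ E ∧ E ∈ H), y E := by
      refine Finset.single_le_sum (fun E _ => hy0 E) ?_
      rw [Finset.mem_filter]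
      exact ⟨hGP, hvG, hGH⟩
    have hzero : ∑ F ∈ P3.filter (fun F => v ∈ F ∧ F ∉ H), y F = 0 := by
      refine Finset.sum_eq_zero fun F hF => ?_
      rw [Finset.mem_filter] at hF
      exact hyzero F (by rw [hTm, Finset.mem_filter]; exact ⟨hF.1, hF.2.2⟩)
    rw [hveq v, hzero] at hle
    linarith
  · exact hGne (hyzero G (by rw [hTm, Finset.mem_filter]; exact ⟨hGP, hGH⟩))

theorem easy
    (H : Finset (Finset V))
    (hH : ∀ E ∈ H, E.card = 3)
    (hex : ExchangeableHypergraph H) : EquatableHypergraph 3 H := by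
  obtain ⟨E₁, hE₁, E₂, hE₂, v₁, hv₁, v₂, hv₂, hF₁, hF₂⟩ := hex
  rw [Finset.mem_sdiff] at hv₁ hv₂
  obtain ⟨hv₁E₁, hv₁E₂⟩ := hv₁
  obtain ⟨hv₂E₂, hv₂E₁⟩ := hv₂
  have hv12 : v₁ ≠ v₂ := fun h => hv₁E₂ (h ▸ hv₂E₂)
  set F₁ := insert v₂ (E₁.erase v₁) with hF₁def
  set F₂ := insert v₁ (E₂.erase v₂) with hF₂def
  have hc1 : F₁.card = 3 := by
    rw [hF₁def, Finset.card_insert_of_notMem (fun h => hv₂E₁ (Finset.mem_of_mem_erase h)),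
      Finset.card_erase_of_mem hv₁E₁, hH E₁ hE₁]
  have hc2 : F₂.card = 3 := by
    rw [hF₂def, Finset.card_insert_of_notMem (fun h => hv₁E₂ (Finset.mem_of_mem_erase h)),
      Finset.card_erase_of_mem hv₂E₂, hH E₂ hE₂]
  set P3 := (univ : Finset V).powersetCard 3 with hP3
  have hmP : ∀ S : Finset V, S ∈ P3 ↔ S.card = 3 := fun S => Finset.mem_powersetCard_univ
  set y : Finset V → ℝ := fun G =>
    (if G = E₁ then (1:ℝ) else 0) + (if G = E₂ then 1 else 0) +
    (if G = F₁ then 1 else 0) + (if G = F₂ then 1 else 0) with hy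
  refine ⟨y, ?_, ⟨E₁, (hmP E₁).mpr (hH E₁ hE₁), ?_⟩, ?_⟩
  · intro G; simp only [hy]; split_ifs <;> norm_num
  · simp only [hy]
    norm_num
    split_ifs <;> norm_num
  · intro v
    have hsum : ∀ (T : Finset (Finset V)),
        ∑ E ∈ T, y E = (if E₁ ∈ T then (1:ℝ) else 0) + (if E₂ ∈ T then 1 else 0) +
          (if F₁ ∈ T then 1 else 0) + (if F₂ ∈ T then 1 else 0) := by
      intro T
      simp only [hy]
      rw [Finset.sum_add_distrib, Finset.sum_add_distrib, Finset.sum_add_distrib]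
      rw [Finset.sum_ite_eq' T E₁ (fun _ => (1:ℝ)), Finset.sum_ite_eq' T E₂ (fun _ => (1:ℝ)),
        Finset.sum_ite_eq' T F₁ (fun _ => (1:ℝ)), Finset.sum_ite_eq' T F₂ (fun _ => (1:ℝ))]
    rw [hsum, hsum]
    have m1 : E₁ ∈ P3.filter (fun E => v ∈ E ∧ E ∈ H) ↔ v ∈ E₁ := by
      simp [Finset.mem_filter, hmP, hH E₁ hE₁, hE₁]
    have m2 : E₂ ∈ P3.filter (fun E => v ∈ E ∧ E ∈ H) ↔ v ∈ E₂ := by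
      simp [Finset.mem_filter, hmP, hH E₂ hE₂, hE₂]
    have m3 : F₁ ∉ P3.filter (fun E => v ∈ E ∧ E ∈ H) := by
      simp [Finset.mem_filter, hF₁]
    have m4 : F₂ ∉ P3.filter (fun E => v ∈ E ∧ E ∈ H) := by
      simp [Finset.mem_filter, hF₂]
    have n1 : E₁ ∉ P3.filter (fun F => v ∈ F ∧ F ∉ H) := by
      simp [Finset.mem_filter, hE₁]
    have n2 : E₂ ∉ P3.filter (fun F => v ∈ F ∧ F ∉ H) := by
      simp [Finset.mem_filter, hE₂]
    have n3 : F₁ ∈ P3.filter (fun F => v ∈ F ∧ F ∉ H) ↔ v ∈ F₁ := by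
      simp [Finset.mem_filter, hmP, hc1, hF₁]
    have n4 : F₂ ∈ P3.filter (fun F => v ∈ F ∧ F ∉ H) ↔ v ∈ F₂ := by
      simp [Finset.mem_filter, hmP, hc2, hF₂]
    rw [if_neg m3, if_neg m4, if_neg n1, if_neg n2]
    have mf1 : v ∈ F₁ ↔ v = v₂ ∨ (v ≠ v₁ ∧ v ∈ E₁) := by
      rw [hF₁def]; simp [Finset.mem_insert, Finset.mem_erase]
    have mf2 : v ∈ F₂ ↔ v = v₁ ∨ (v ≠ v₂ ∧ v ∈ E₂) := by
      rw [hF₂def]; simp [Finset.mem_insert, Finset.mem_erase]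
    rw [← hP3]
    simp only [m1, m2, n3, n4, mf1, mf2]
    by_cases h1 : v = v₁ <;> by_cases h2 : v = v₂ <;> by_cases h3 : v ∈ E₁ <;>
      by_cases h4 : v ∈ E₂ <;> simp_all <;> norm_num


end Aux

/-- A 3-matroid is equatable iff it is exchangeable. -/
theorem three_matroid_equatable_iff_exchangeable [Fintype V] [DecidableEq V]
    (H : Finset (Finset V))
    (hn : 3 ≤ Fintype.card V)
    (hH : ∀ E ∈ H, E.card = 3) (hne : H.Nonempty)
    (hbex : ∀ E₁ ∈ H, ∀ E₂ ∈ H, ∀ v₁ ∈ E₁ \ E₂,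
      ∃ v₂ ∈ E₂ \ E₁, insert v₂ (E₁.erase v₁) ∈ H) :
    EquatableHypergraph 3 H ↔ ExchangeableHypergraph H :=
  ⟨fun h => hard H hH hne hbex h, fun h => easy H hH h⟩
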